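/- Let ξ₁,…,ξₙ be an ε-orthonormal basis of ℝⁿ with ε < 1/(2n), and let L : ℝⁿ → ℝⁿ be linear with |⟨Lξᵢ, Lξⱼ⟩ − ⟨ξᵢ, ξⱼ⟩| < δ for all i,j, where 8n√n·δ < 1. Then there exists a linear isometry Q : ℝⁿ → ℝⁿ with ‖L − Q‖ < 8n√n·δ. -/

import Mathlib

open scoped RealInnerProductSpace

set_option maxHeartbeats 2000000 in
theorem stmt2 (n : ℕ) (hn : 0 < n) (ε δ : ℝ) (hε : 0 < ε) (hεn : ε < 1 / (2 * n))
    (hδ : 0 < δ) (hδn : 8 * n * Real.sqrt n * δ < 1)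
    (ξ : Fin n → EuclideanSpace ℝ (Fin n))
    (horth : ∀ i j, |⟪ξ i, ξ j⟫ - (if i = j then (1:ℝ) else 0)| < ε)
    (L : EuclideanSpace ℝ (Fin n) →L[ℝ] EuclideanSpace ℝ (Fin n))
    (hL : ∀ i j, |⟪L (ξ i), L (ξ j)⟫ - ⟪ξ i, ξ j⟫| < δ) :
    ∃ Q : EuclideanSpace ℝ (Fin n) →ₗᵢ[ℝ] EuclideanSpace ℝ (Fin n),
      ‖L - Q.toContinuousLinearMap‖ < 8 * n * Real.sqrt n * δ := by
  classical
  haveI : Nonempty (Fin n) := ⟨⟨0, hn⟩⟩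
  have npos : (0:ℝ) < n := by exact_mod_cast hn
  have hsn : (1:ℝ) ≤ Real.sqrt n := by
    rw [show (1:ℝ) = Real.sqrt 1 by simp]
    exact Real.sqrt_le_sqrt (by exact_mod_cast hn)
  have hεn' : (n:ℝ) * ε ≤ 1 / 2 := by
    have h := hεn
    rw [lt_div_iff₀ (by positivity : (0:ℝ) < 2 * n)] at h
    nlinarith
  have h2nδ : 2 * (n:ℝ) * δ < 1 / 4 := by
    nlinarith [mul_pos npos hδ]
  -- lower bound for the Gram quadratic form
  have lower : ∀ c : Fin n → ℝ, (1/2) * (∑ i, c i ^ 2) ≤ ‖∑ i, c i • ξ i‖ ^ 2 := by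
    intro c
    have expand : ‖∑ i, c i • ξ i‖ ^ 2 = ∑ i, ∑ j, c i * (c j * ⟪ξ i, ξ j⟫) := by
      rw [← real_inner_self_eq_norm_sq, sum_inner]
      simp_rw [inner_sum, real_inner_smul_left, real_inner_smul_right]
    have diag : ∑ i, ∑ j, (c i * (c j * ⟪ξ i, ξ j⟫)
        - c i * c j * (⟪ξ i, ξ j⟫ - if i = j then (1:ℝ) else 0)) = ∑ i, c i ^ 2 := by
      have h : ∀ i j : Fin n, c i * (c j * ⟪ξ i, ξ j⟫)
          - c i * c j * (⟪ξ i, ξ j⟫ - if i = j then (1:ℝ) else 0)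
          = c i * c j * (if i = j then (1:ℝ) else 0) := by
        intro i j; ring
      simp_rw [h, mul_ite, mul_one, mul_zero, Finset.sum_ite_eq, Finset.mem_univ, if_true]
      exact Finset.sum_congr rfl fun i _ => by ring
    have errb : |∑ i, ∑ j, c i * c j * (⟪ξ i, ξ j⟫ - if i = j then (1:ℝ) else 0)|
        ≤ ε * (∑ i, |c i|) ^ 2 := by
      calc |∑ i, ∑ j, c i * c j * (⟪ξ i, ξ j⟫ - if i = j then (1:ℝ) else 0)|
          ≤ ∑ i, ∑ j, |c i * c j * (⟪ξ i, ξ j⟫ - if i = j then (1:ℝ) else 0)| := by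
            refine (Finset.abs_sum_le_sum_abs _ _).trans ?_
            exact Finset.sum_le_sum fun i _ => Finset.abs_sum_le_sum_abs _ _
        _ ≤ ∑ i, ∑ j, |c i| * |c j| * ε := by
            refine Finset.sum_le_sum fun i _ => Finset.sum_le_sum fun j _ => ?_
            rw [abs_mul, abs_mul]
            exact mul_le_mul_of_nonneg_left (le_of_lt (horth i j)) (by positivity)
        _ = ε * (∑ i, |c i|) ^ 2 := by
            rw [sq, Finset.sum_mul_sum]
            rw [Finset.mul_sum]
            refine Finset.sum_congr rfl fun i _ => ?_
            rw [Finset.mul_sum]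
            exact Finset.sum_congr rfl fun j _ => by ring
    have cauchy : (∑ i, |c i|) ^ 2 ≤ (n:ℝ) * ∑ i, c i ^ 2 := by
      have := sq_sum_le_card_mul_sum_sq (s := Finset.univ) (f := fun i => |c i|)
      simpa [sq_abs] using this
    have habs := abs_le.mp errb
    have hεc : ε * (∑ i, |c i|) ^ 2 ≤ (1/2) * ∑ i, c i ^ 2 := by
      have h1 : ε * (∑ i, |c i|) ^ 2 ≤ ε * ((n:ℝ) * ∑ i, c i ^ 2) :=
        mul_le_mul_of_nonneg_left cauchy (le_of_lt hε)
      nlinarith [Finset.sum_nonneg (fun i (_ : i ∈ Finset.univ) => sq_nonneg (c i))]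
    have hsplit : ∑ i, ∑ j, c i * (c j * ⟪ξ i, ξ j⟫)
        = (∑ i, c i ^ 2) + ∑ i, ∑ j, c i * c j * (⟪ξ i, ξ j⟫ - if i = j then (1:ℝ) else 0) := by
      rw [← diag]
      simp_rw [Finset.sum_sub_distrib]
      ring
    rw [expand, hsplit]
    linarith [habs.1]
  -- the linear map sending coefficients to combinations
  let F : (Fin n → ℝ) →ₗ[ℝ] EuclideanSpace ℝ (Fin n) :=
    { toFun := fun c => ∑ i, c i • ξ i
      map_add' := fun a b => by simp [add_smul, Finset.sum_add_distrib]
      map_smul' := fun m a => by simp [smul_smul, Finset.smul_sum]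
    }
  have hFapp : ∀ c, F c = ∑ i, c i • ξ i := fun c => rfl
  have hFinj : Function.Injective F := by
    rw [← LinearMap.ker_eq_bot, LinearMap.ker_eq_bot']
    intro c hc
    have h0 : (1/2) * (∑ i, c i ^ 2) ≤ 0 := by
      have := lower c
      rw [← hFapp, hc] at this
      simpa using this
    have hsum : ∑ i, c i ^ 2 ≤ 0 := by linarith
    funext i
    have hle : c i ^ 2 ≤ ∑ j, c j ^ 2 :=
      Finset.single_le_sum (fun j _ => sq_nonneg (c j)) (Finset.mem_univ i)
    have : c i ^ 2 = 0 := le_antisymm (by linarith) (sq_nonneg _)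
    simpa using (pow_eq_zero_iff two_ne_zero).mp this
  have hFsurj : Function.Surjective F := by
    have hfr : Module.finrank ℝ (Fin n → ℝ) = Module.finrank ℝ (EuclideanSpace ℝ (Fin n)) := by
      rw [Module.finrank_fintype_fun_eq_card, finrank_euclideanSpace_fin, Fintype.card_fin]
    exact (LinearMap.injective_iff_surjective_of_finrank_eq_finrank hfr).mp hFinj
  -- key bilinear bound
  have key : ∀ v w : EuclideanSpace ℝ (Fin n),
      |⟪L v, L w⟫ - ⟪v, w⟫| ≤ 2 * n * δ * (‖v‖ * ‖w‖) := by
    intro v w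
    obtain ⟨c, rfl⟩ := hFsurj v
    obtain ⟨d, rfl⟩ := hFsurj w
    rw [hFapp, hFapp]
    have hLsum : ∀ c : Fin n → ℝ, L (∑ i, c i • ξ i) = ∑ i, c i • L (ξ i) := by
      intro c; rw [map_sum]; simp_rw [map_smul]
    have hdiff : ⟪L (∑ i, c i • ξ i), L (∑ j, d j • ξ j)⟫ - ⟪∑ i, c i • ξ i, ∑ j, d j • ξ j⟫
        = ∑ i, ∑ j, c i * d j * (⟪L (ξ i), L (ξ j)⟫ - ⟪ξ i, ξ j⟫) := by
      rw [hLsum, hLsum, sum_inner, sum_inner]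
      simp_rw [inner_sum, real_inner_smul_left, real_inner_smul_right, ← Finset.sum_sub_distrib]
      refine Finset.sum_congr rfl fun i _ => Finset.sum_congr rfl fun j _ => by ring
    rw [hdiff]
    have hbound : |∑ i, ∑ j, c i * d j * (⟪L (ξ i), L (ξ j)⟫ - ⟪ξ i, ξ j⟫)|
        ≤ δ * ((∑ i, |c i|) * (∑ j, |d j|)) := by
      calc |∑ i, ∑ j, c i * d j * (⟪L (ξ i), L (ξ j)⟫ - ⟪ξ i, ξ j⟫)|
          ≤ ∑ i, ∑ j, |c i * d j * (⟪L (ξ i), L (ξ j)⟫ - ⟪ξ i, ξ j⟫)| := by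
            refine (Finset.abs_sum_le_sum_abs _ _).trans ?_
            exact Finset.sum_le_sum fun i _ => Finset.abs_sum_le_sum_abs _ _
        _ ≤ ∑ i, ∑ j, |c i| * |d j| * δ := by
            refine Finset.sum_le_sum fun i _ => Finset.sum_le_sum fun j _ => ?_
            rw [abs_mul, abs_mul]
            exact mul_le_mul_of_nonneg_left (le_of_lt (hL i j)) (by positivity)
        _ = δ * ((∑ i, |c i|) * (∑ j, |d j|)) := by
            rw [Finset.sum_mul_sum, Finset.mul_sum]
            refine Finset.sum_congr rfl fun i _ => ?_
            rw [Finset.mul_sum]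
            exact Finset.sum_congr rfl fun j _ => by ring
    refine hbound.trans ?_
    -- now estimate the ℓ¹ norms
    have hc2 : (∑ i, |c i|) ^ 2 ≤ 2 * (n:ℝ) * ‖∑ i, c i • ξ i‖ ^ 2 := by
      have h1 : (∑ i, |c i|) ^ 2 ≤ (n:ℝ) * ∑ i, c i ^ 2 := by
        have := sq_sum_le_card_mul_sum_sq (s := Finset.univ) (f := fun i => |c i|)
        simpa [sq_abs] using this
      nlinarith [lower c]
    have hd2 : (∑ j, |d j|) ^ 2 ≤ 2 * (n:ℝ) * ‖∑ j, d j • ξ j‖ ^ 2 := by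
      have h1 : (∑ j, |d j|) ^ 2 ≤ (n:ℝ) * ∑ j, d j ^ 2 := by
        have := sq_sum_le_card_mul_sum_sq (s := Finset.univ) (f := fun j => |d j|)
        simpa [sq_abs] using this
      nlinarith [lower d]
    have hST : (∑ i, |c i|) * (∑ j, |d j|)
        ≤ 2 * (n:ℝ) * (‖∑ i, c i • ξ i‖ * ‖∑ j, d j • ξ j‖) := by
      have hS : (0:ℝ) ≤ ∑ i, |c i| := Finset.sum_nonneg fun i _ => abs_nonneg _
      have hT : (0:ℝ) ≤ ∑ j, |d j| := Finset.sum_nonneg fun j _ => abs_nonneg _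
      have hsq : ((∑ i, |c i|) * (∑ j, |d j|)) ^ 2
          ≤ (2 * (n:ℝ) * (‖∑ i, c i • ξ i‖ * ‖∑ j, d j • ξ j‖)) ^ 2 := by
        have h1 := mul_le_mul hc2 hd2 (by positivity) (by positivity)
        calc ((∑ i, |c i|) * (∑ j, |d j|)) ^ 2
            = (∑ i, |c i|) ^ 2 * (∑ j, |d j|) ^ 2 := by ring
          _ ≤ (2 * (n:ℝ) * ‖∑ i, c i • ξ i‖ ^ 2) * (2 * (n:ℝ) * ‖∑ j, d j • ξ j‖ ^ 2) := h1
          _ = (2 * (n:ℝ) * (‖∑ i, c i • ξ i‖ * ‖∑ j, d j • ξ j‖)) ^ 2 := by ring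
      exact le_of_pow_le_pow_left₀ two_ne_zero (by positivity) hsq
    calc δ * ((∑ i, |c i|) * (∑ j, |d j|))
        ≤ δ * (2 * (n:ℝ) * (‖∑ i, c i • ξ i‖ * ‖∑ j, d j • ξ j‖)) :=
          mul_le_mul_of_nonneg_left hST (le_of_lt hδ)
      _ = 2 * n * δ * (‖∑ i, c i • ξ i‖ * ‖∑ j, d j • ξ j‖) := by ring
  -- spectral decomposition of L* L
  let Tl : EuclideanSpace ℝ (Fin n) →ₗ[ℝ] EuclideanSpace ℝ (Fin n) :=
    ((ContinuousLinearMap.adjoint L).comp L).toLinearMap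
  have hsym : Tl.IsSymmetric := by
    intro x y
    simp only [Tl, ContinuousLinearMap.coe_comp', ContinuousLinearMap.coe_coe,
      Function.comp_apply]
    rw [ContinuousLinearMap.adjoint_inner_left, ContinuousLinearMap.adjoint_inner_right]
  have frank : Module.finrank ℝ (EuclideanSpace ℝ (Fin n)) = n := finrank_euclideanSpace_fin
  let e : OrthonormalBasis (Fin n) ℝ (EuclideanSpace ℝ (Fin n)) := hsym.eigenvectorBasis frank
  let μ : Fin n → ℝ := hsym.eigenvalues frank
  have hTe : ∀ i, Tl (e i) = μ i • e i := fun i => by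
    exact_mod_cast hsym.apply_eigenvectorBasis frank i
  have hee : ∀ i j, ⟪e i, e j⟫ = if i = j then (1:ℝ) else 0 :=
    orthonormal_iff_ite.mp e.orthonormal
  have hLee : ∀ i j, ⟪L (e i), L (e j)⟫ = μ i * (if i = j then (1:ℝ) else 0) := by
    intro i j
    have h1 : ⟪L (e i), L (e j)⟫ = ⟪Tl (e i), e j⟫ := by
      simp only [Tl, ContinuousLinearMap.coe_comp', ContinuousLinearMap.coe_coe,
        Function.comp_apply]
      rw [ContinuousLinearMap.adjoint_inner_left]
    rw [h1, hTe i, real_inner_smul_left, hee]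
  have hμ : ∀ i, |μ i - 1| ≤ 2 * n * δ := by
    intro i
    have h1 := key (e i) (e i)
    rw [hLee, hee] at h1
    simp only [if_pos rfl, mul_one] at h1
    have hni : ‖e i‖ = 1 := e.orthonormal.1 i
    rw [hni] at h1
    simpa using h1
  have hμpos : ∀ i, (3/4 : ℝ) ≤ μ i := by
    intro i
    have := abs_le.mp (hμ i)
    linarith [this.1]
  have hsqpos : ∀ i, (0:ℝ) < Real.sqrt (μ i) := fun i =>
    Real.sqrt_pos.mpr (by linarith [hμpos i])
  have hsq : ∀ i, |Real.sqrt (μ i) - 1| ≤ 2 * n * δ := by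
    intro i
    have h1 := abs_le.mp (hμ i)
    have hs2 : Real.sqrt (μ i) ^ 2 = μ i := Real.sq_sqrt (by linarith [hμpos i])
    have hs0 : (0:ℝ) ≤ Real.sqrt (μ i) := Real.sqrt_nonneg _
    rw [abs_le]
    constructor
    · nlinarith
    · nlinarith
  -- orthonormal family f
  set f : Fin n → EuclideanSpace ℝ (Fin n) :=
    fun i => (Real.sqrt (μ i))⁻¹ • L (e i) with hf
  have horthf : Orthonormal ℝ f := by
    rw [orthonormal_iff_ite]
    intro i j
    rw [hf]
    simp only [real_inner_smul_left, real_inner_smul_right]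
    rw [hLee]
    by_cases h : i = j
    · subst h
      simp only [if_pos rfl, mul_one]
      have hs2 : Real.sqrt (μ i) * Real.sqrt (μ i) = μ i :=
        Real.mul_self_sqrt (by linarith [hμpos i])
      have hsne : Real.sqrt (μ i) ≠ 0 := ne_of_gt (hsqpos i)
      rw [← hs2]
      field_simp
      rw [Real.sqrt_sq (le_of_lt (hsqpos i))]
    · simp [h]
  have hLe : ∀ i, L (e i) = Real.sqrt (μ i) • f i := by
    intro i
    rw [hf]
    rw [smul_smul, mul_inv_cancel₀ (ne_of_gt (hsqpos i)), one_smul]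
  -- build the isometry
  have card_eq : Fintype.card (Fin n) = Module.finrank ℝ (EuclideanSpace ℝ (Fin n)) := by
    rw [Fintype.card_fin, frank]
  let bf := basisOfOrthonormalOfCardEqFinrank horthf card_eq
  have hbf : ⇑bf = f := coe_basisOfOrthonormalOfCardEqFinrank _ _
  let f' : OrthonormalBasis (Fin n) ℝ (EuclideanSpace ℝ (Fin n)) :=
    bf.toOrthonormalBasis (by rwa [hbf])
  have hf'c : ⇑f' = f := by
    rw [show ⇑f' = ⇑bf from Module.Basis.coe_toOrthonormalBasis bf _, hbf]
  let Q : EuclideanSpace ℝ (Fin n) ≃ₗᵢ[ℝ] EuclideanSpace ℝ (Fin n) :=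
    e.repr.trans f'.repr.symm
  have hQ : ∀ i, Q (e i) = f i := by
    intro i
    simp only [Q, LinearIsometryEquiv.trans_apply, e.repr_self, f'.repr_symm_single, hf'c]
  refine ⟨Q.toLinearIsometry, ?_⟩
  have hQc : ∀ v, (Q.toLinearIsometry.toContinuousLinearMap) v = Q v := fun v => rfl
  have hb : ‖L - Q.toLinearIsometry.toContinuousLinearMap‖ ≤ 2 * n * δ := by
    refine ContinuousLinearMap.opNorm_le_bound _ (by positivity) ?_
    intro v
    set a : Fin n → ℝ := fun i => e.repr v i with ha
    have hv : ∑ i, a i • e i = v := e.sum_repr v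
    have hLv : (L - Q.toLinearIsometry.toContinuousLinearMap) v
        = ∑ i, (a i * (Real.sqrt (μ i) - 1)) • f i := by
      rw [ContinuousLinearMap.sub_apply, hQc]
      have h1 : L v = ∑ i, a i • (Real.sqrt (μ i) • f i) := by
        conv_lhs => rw [← hv]
        rw [map_sum]
        exact Finset.sum_congr rfl fun i _ => by rw [map_smul, hLe]
      have h2 : Q v = ∑ i, a i • f i := by
        conv_lhs => rw [← hv]
        rw [map_sum]
        exact Finset.sum_congr rfl fun i _ => by rw [LinearIsometryEquiv.map_smul, hQ]
      rw [h1, h2, ← Finset.sum_sub_distrib]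
      refine Finset.sum_congr rfl fun i _ => ?_
      rw [smul_smul, ← sub_smul]
      congr 1
      ring
    have hnorm2 : ‖(L - Q.toLinearIsometry.toContinuousLinearMap) v‖ ^ 2
        = ∑ i, (a i * (Real.sqrt (μ i) - 1)) ^ 2 := by
      rw [hLv, ← real_inner_self_eq_norm_sq, horthf.inner_sum]
      refine Finset.sum_congr rfl fun i _ => ?_
      simp [sq]
    have hv2 : ‖v‖ ^ 2 = ∑ i, a i ^ 2 := by
      conv_lhs => rw [← hv]
      rw [← real_inner_self_eq_norm_sq, e.orthonormal.inner_sum]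
      refine Finset.sum_congr rfl fun i _ => ?_
      simp [sq]
    have hterm : ∀ i, (a i * (Real.sqrt (μ i) - 1)) ^ 2 ≤ (2 * n * δ) ^ 2 * a i ^ 2 := by
      intro i
      have h1 := hsq i
      have h2 : (Real.sqrt (μ i) - 1) ^ 2 ≤ (2 * n * δ) ^ 2 := by
        rw [← sq_abs]
        exact pow_le_pow_left₀ (abs_nonneg _) h1 2
      nlinarith [sq_nonneg (a i)]
    have hfin : ‖(L - Q.toLinearIsometry.toContinuousLinearMap) v‖ ^ 2
        ≤ (2 * n * δ) ^ 2 * ‖v‖ ^ 2 := by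
      rw [hnorm2, hv2, Finset.mul_sum]
      exact Finset.sum_le_sum fun i _ => hterm i
    have h5 : ‖(L - Q.toLinearIsometry.toContinuousLinearMap) v‖ ^ 2
        ≤ (2 * n * δ * ‖v‖) ^ 2 := by
      calc ‖(L - Q.toLinearIsometry.toContinuousLinearMap) v‖ ^ 2
          ≤ (2 * n * δ) ^ 2 * ‖v‖ ^ 2 := hfin
        _ = (2 * n * δ * ‖v‖) ^ 2 := by ring
    exact le_of_pow_le_pow_left₀ two_ne_zero (by positivity) h5
  refine lt_of_le_of_lt hb ?_
  nlinarith [mul_pos npos hδ]
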